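/- Let H be an r-uniform hypergraph (r ≥ 2) with n vertices and m edges. Then for every positive integer k, P_{DP}(H, k) ≤ k^{n − (r−1)m} · (k^{r−1} − 1)^m, provided k^{r−1} ≥ 1 and n ≥ (r−1)m (more generally, the inequality holds whenever the right side is defined; when (r−1)m > n the inequality is interpreted via the rational expression and still holds as P_{DP}(H,k)·k^{(r-1)m-n} ≤ (k^{r−1}−1)^m). -/
import Mathlib


/-
Common definitions: a hypergraph on a finite vertex type `V` is given by its
edge set `E : Finset (Finset V)` (each edge of size ≥ 2).
-/

noncomputable section
open Finset

attribute [local instance] Classical.propDecidable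

variable {V : Type*}

/-- A proper `k`-coloring of the hypergraph with edge set `E`: every edge
contains two vertices with different colors. -/
def ProperColoring (E : Finset (Finset V)) (k : ℕ) (f : V → Fin k) : Prop :=
  ∀ e ∈ E, ∃ u ∈ e, ∃ v ∈ e, f u ≠ f v

/-- The number of proper `k`-colorings (the chromatic polynomial evaluated at `k`). -/
def chromPoly [Fintype V] (E : Finset (Finset V)) (k : ℕ) : ℕ :=
  Nat.card {f : V → Fin k // ProperColoring E k f}

/-- `n(S)`: the number of vertices covered by the edges of `S`. -/
def nVerts [DecidableEq V] (S : Finset (Finset V)) : ℕ := (S.biUnion id).card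

/-- One-step connectivity via an edge of `S`. -/
def connStep (S : Finset (Finset V)) (u v : V) : Prop := ∃ e ∈ S, u ∈ e ∧ v ∈ e

/-- Connectivity via a chain of edges of `S`. -/
def connRel (S : Finset (Finset V)) : V → V → Prop := Relation.ReflTransGen (connStep S)

/-- `c(S)`: the number of connected components of the subhypergraph induced by `S`
(on the vertices covered by `S`). -/
def nComps [DecidableEq V] (S : Finset (Finset V)) : ℕ :=
  Nat.card (Quot (fun a b : {v : V // v ∈ S.biUnion id} => connRel S a.1 b.1))

/-- The number of connected components of the spanning subhypergraph `(V, S)`. -/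
def nCompsFull (S : Finset (Finset V)) : ℕ := Nat.card (Quot (connRel S))

/-- A hypergraph is linear if two distinct edges meet in at most one vertex. -/
def Linear [DecidableEq V] (E : Finset (Finset V)) : Prop :=
  ∀ e ∈ E, ∀ e' ∈ E, e ≠ e' → (e ∩ e').card ≤ 1

/-- `r`-uniform: every edge has exactly `r` vertices. -/
def Uniform (E : Finset (Finset V)) (r : ℕ) : Prop := ∀ e ∈ E, e.card = r

/-- The hypergraph `(V, E)` is connected. -/
def Connected (E : Finset (Finset V)) : Prop := ∀ u v : V, connRel E u v

/-- There is a cycle of length `p` with all edges drawn from `D`: distinct vertices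
`v_1, …, v_p` and distinct edges `e_1, …, e_p` with `{v_{i-1}, v_i} ⊆ e_i` (cyclically). -/
def IsCycle (D : Finset (Finset V)) (p : ℕ) : Prop :=
  2 ≤ p ∧ ∃ (vs : ZMod p → V) (es : ZMod p → Finset V),
    Function.Injective vs ∧ Function.Injective es ∧
    ∀ i, es i ∈ D ∧ vs i ∈ es i ∧ vs i ∈ es (i + 1)

/-- There is a cycle of length `p` through the edge `e`, with all edges drawn from `D`. -/
def CycleThrough (D : Finset (Finset V)) (e : Finset V) (p : ℕ) : Prop :=
  2 ≤ p ∧ ∃ (vs : ZMod p → V) (es : ZMod p → Finset V),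
    Function.Injective vs ∧ Function.Injective es ∧ (∃ i, es i = e) ∧
    ∀ i, es i ∈ D ∧ vs i ∈ es i ∧ vs i ∈ es (i + 1)

/-- The domain of a partial map `V ⇀ Fin k`. -/
def pmDom [Fintype V] {k : ℕ} (φ : V → Option (Fin k)) : Finset V :=
  univ.filter (fun v => (φ v).isSome)

/-- `F` is a `k`-fold cover of the hypergraph with edge set `E`: domains are edges, and
distinct members with the same domain are disjoint as sets of (vertex, color) pairs. -/
def IsCover [Fintype V] (E : Finset (Finset V)) (k : ℕ)
    (F : Finset (V → Option (Fin k))) : Prop :=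
  (∀ φ ∈ F, pmDom φ ∈ E) ∧
    ∀ φ ∈ F, ∀ ψ ∈ F, φ ≠ ψ → pmDom φ = pmDom ψ → ∀ v c, φ v = some c → ψ v ≠ some c

/-- `φ ⊆ f` as graphs of partial maps. -/
def SubMap {k : ℕ} (φ : V → Option (Fin k)) (f : V → Fin k) : Prop :=
  ∀ v c, φ v = some c → f v = c

/-- The number of `F`-colorings: total colorings avoiding every member of `F`. -/
def dpCount [Fintype V] (k : ℕ) (F : Finset (V → Option (Fin k))) : ℕ :=
  Nat.card {f : V → Fin k // ∀ φ ∈ F, ¬ SubMap φ f}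

/-- The DP color function: the minimum of `dpCount` over all `k`-fold covers. -/
def dpPoly [Fintype V] (E : Finset (Finset V)) (k : ℕ) : ℕ :=
  sInf {n | ∃ F, IsCover E k F ∧ n = dpCount k F}

/-- The natural `k`-cover: for each edge `e` and color `i`, the constant map `e ↦ i`. -/
def natCover [Fintype V] [DecidableEq V] (E : Finset (Finset V)) (k : ℕ) :
    Finset (V → Option (Fin k)) :=
  E.biUnion fun e => (univ : Finset (Fin k)).image fun i v => if v ∈ e then some i else none

/-- The join `H ∨ K_p`, realized on the vertex type `V ⊕ Fin p`. -/
def joinK [Fintype V] [DecidableEq V] (E : Finset (Finset V)) (p : ℕ) :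
    Finset (Finset (V ⊕ Fin p)) :=
  E.image (Finset.image Sum.inl) ∪
    (univ : Finset (V × Fin p)).image (fun x => {Sum.inl x.1, Sum.inr x.2}) ∪
    ((univ : Finset (Fin p × Fin p)).filter (fun x => x.1 ≠ x.2)).image
      (fun x => ({Sum.inr x.1, Sum.inr x.2} : Finset (V ⊕ Fin p)))

/-- The join `K₁ ∨ H`, realized on `Option V` with new vertex `none`. -/
def joinOne [Fintype V] [DecidableEq V] (E : Finset (Finset V)) : Finset (Finset (Option V)) :=
  E.image (Finset.image some) ∪
    (univ : Finset V).image (fun v => ({none, some v} : Finset (Option V)))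

/-- The number of neighbors of `σ i` among `σ j`, `j < i`. -/
def backDeg [Fintype V] (E : Finset (Finset V)) (σ : Fin (Fintype.card V) ≃ V)
    (i : Fin (Fintype.card V)) : ℕ :=
  (univ.filter fun j => j < i ∧ σ j ≠ σ i ∧ ∃ e ∈ E, σ i ∈ e ∧ σ j ∈ e).card

/-- There is an ordering witnessing coloring number at most `d`. -/
def HasColOrd [Fintype V] (E : Finset (Finset V)) (d : ℕ) : Prop :=
  ∃ σ : Fin (Fintype.card V) ≃ V, ∀ i, backDeg E σ i ≤ d - 1

/-- The coloring number `col(H)`. -/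
def colNum [Fintype V] (E : Finset (Finset V)) : ℕ := sInf {d | HasColOrd E d}

/-- `Φ_j` is a level mapping for the cover `F` of `K₁ ∨ H`: for each original edge `e`
there is a member of `F` with domain `e` agreeing, at every vertex of `e`, with the
member of `F` on the edge `{w, v}` sending `w = none` to `j`. -/
def LevelMap [Fintype V] [DecidableEq V] (E : Finset (Finset V)) (k : ℕ)
    (F : Finset (Option V → Option (Fin k))) (j : Fin k) : Prop :=
  ∀ e ∈ E, ∃ ψ ∈ F, pmDom ψ = e.image some ∧
    ∀ v ∈ e, ∀ φ ∈ F,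
      (pmDom φ = ({none, some v} : Finset (Option V)) ∧ φ none = some j) →
        ψ (some v) = φ (some v)


lemma dpCount_eq_card [Fintype V] [DecidableEq V] (k : ℕ) (F : Finset (V → Option (Fin k))) :
    dpCount k F = (univ.filter fun f : V → Fin k => ∀ φ ∈ F, ¬ SubMap φ f).card := by
  rw [dpCount, Nat.card_eq_fintype_card]
  exact Fintype.card_of_subtype _ (fun f => by simp)

lemma isCover_empty [Fintype V] (E : Finset (Finset V)) (k : ℕ) :
    IsCover E k (∅ : Finset (V → Option (Fin k))) := by
  constructor <;> simp [IsCover]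

lemma dpPoly_le_dpCount [Fintype V] {E : Finset (Finset V)} {k : ℕ}
    {F : Finset (V → Option (Fin k))} (h : IsCover E k F) :
    dpPoly E k ≤ dpCount k F := Nat.sInf_le ⟨F, h, rfl⟩

lemma dpCount_empty [Fintype V] [DecidableEq V] (k : ℕ) :
    dpCount k (∅ : Finset (V → Option (Fin k))) = k ^ Fintype.card V := by
  rw [dpCount_eq_card]
  simp only [Finset.notMem_empty, false_implies, implies_true, Finset.filter_true_of_mem,
    Finset.card_univ]
  simp [Fintype.card_fun]

set_option maxHeartbeats 1000000 in
/-- for an `r`-uniform hypergraph with `n` vertices and `m` edges,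
`P_DP(H,k) ≤ k^{n-(r-1)m}(k^{r-1}-1)^m`, stated in the cleared form
`P_DP(H,k) · k^{(r-1)m} ≤ k^n · (k^{r-1}-1)^m`. -/
theorem stmt14 [Fintype V] [DecidableEq V] (E : Finset (Finset V)) (r : ℕ) (hr : 2 ≤ r)
    (hunif : Uniform E r) (k : ℕ) (hk : 0 < k) :
    dpPoly E k * k ^ ((r - 1) * E.card)
      ≤ k ^ Fintype.card V * (k ^ (r - 1) - 1) ^ E.card := by
  haveI : NeZero k := ⟨hk.ne'⟩
  haveI : Nonempty (Fin k) := ⟨⟨0, hk⟩⟩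
  set n := Fintype.card V with hn
  set q : ℕ := k ^ (r - 1) with hqdef
  have hq1 : 1 ≤ q := Nat.one_le_pow _ _ hk
  clear_value q n
  revert hunif
  induction E using Finset.induction_on with
  | empty =>
      intro hunif
      simp only [Finset.card_empty, Nat.mul_zero, pow_zero, mul_one]
      calc dpPoly (∅ : Finset (Finset V)) k ≤ dpCount k (∅ : Finset (V → Option (Fin k))) :=
              dpPoly_le_dpCount (isCover_empty _ _)
        _ = k ^ n := by rw [hn]; exact dpCount_empty k
  | @insert e E' he IH =>
      intro hunif
      have hunif' : Uniform E' r := fun e' h' => hunif e' (Finset.mem_insert_of_mem h')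
      have hcard_e : e.card = r := hunif e (Finset.mem_insert_self _ _)
      have IH' := IH hunif'
      -- minimizing cover for E'
      have hne : {n | ∃ F, IsCover E' k F ∧ n = dpCount k F}.Nonempty :=
        ⟨dpCount k (∅ : Finset (V → Option (Fin k))), ∅, isCover_empty E' k, rfl⟩
      obtain ⟨F', hF', hN⟩ : ∃ F, IsCover E' k F ∧ dpPoly E' k = dpCount k F :=
        Nat.sInf_mem hne
      -- pick a vertex of e
      have hene : e.Nonempty := Finset.card_pos.mp (by omega)
      obtain ⟨w, hw⟩ := hene
      set s : Finset V := e.erase w with hsdef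
      have hscard : s.card = r - 1 := by
        rw [hsdef, Finset.card_erase_of_mem hw, hcard_e]
      have hwns : w ∉ s := Finset.notMem_erase _ _
      -- the class of a coloring, the extension of a class, and the twisted maps
      set cls : (V → Fin k) → (↥s → Fin k) := fun f v => f v.1 - f w with hcls
      set ext : (↥s → Fin k) → V → Fin k :=
        fun g v => if h : v ∈ s then g ⟨v, h⟩ else 0 with hext
      set Φ : (↥s → Fin k) → Fin k → (V → Option (Fin k)) :=
        fun g c v => if v ∈ e then some (ext g v + c) else none with hΦ
      have hsub : ∀ (g : ↥s → Fin k) (c : Fin k) (f : V → Fin k),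
          SubMap (Φ g c) f ↔ (cls f = g ∧ f w = c) := by
        intro g c f
        constructor
        · intro h
          have hval : ∀ v ∈ e, f v = ext g v + c := by
            intro v hv
            exact h v _ (by simp [hΦ, hv])
          have hfw : f w = c := by
            have h1 := hval w hw
            simp only [hext, dif_neg hwns, zero_add] at h1
            exact h1
          refine ⟨?_, hfw⟩
          funext v
          have hv : (v : V) ∈ s := v.2
          have hve : (v : V) ∈ e := Finset.mem_of_mem_erase (hv : (v : V) ∈ e.erase w)
          have h3 := hval v hve
          simp only [hext, dif_pos hv] at h3
          simp only [hcls]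
          rw [h3, hfw, add_sub_cancel_right]
        · rintro ⟨hclsf, hfw⟩
          intro v a ha
          simp only [hΦ] at ha
          by_cases hv : v ∈ e
          · rw [if_pos hv] at ha
            have ha' : a = ext g v + c := (Option.some.inj ha).symm
            rw [ha']
            by_cases hvw : v = w
            · subst hvw
              simp only [hext, dif_neg hwns, zero_add]
              exact hfw
            · have hvs : v ∈ s := Finset.mem_erase.mpr ⟨hvw, hv⟩
              simp only [hext, dif_pos hvs]
              have h4 : g ⟨v, hvs⟩ = f v - f w := by
                rw [← hclsf]
              rw [h4, hfw, sub_add_cancel]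
          · rw [if_neg hv] at ha; exact absurd ha (by simp)
      have hdom : ∀ g c, pmDom (Φ g c) = e := by
        intro g c
        ext v
        simp only [pmDom, Finset.mem_filter, Finset.mem_univ, true_and, hΦ]
        by_cases hv : v ∈ e <;> simp [hv]
      -- the set of F'-colorings
      set S : Finset (V → Fin k) := univ.filter (fun f => ∀ φ ∈ F', ¬ SubMap φ f) with hS
      have hScard : S.card = dpCount k F' := by rw [dpCount_eq_card, hS]
      have hq'q : Fintype.card (↥s → Fin k) = q := by
        simp [Fintype.card_fun, hscard, hqdef]
      -- pigeonhole: some class has a large fiber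
      have hsum : S.card = ∑ g : ↥s → Fin k, (S.filter fun f => cls f = g).card :=
        Finset.card_eq_sum_card_fiberwise (fun f _ => Finset.mem_univ _)
      obtain ⟨g, -, hg⟩ : ∃ g ∈ (univ : Finset (↥s → Fin k)),
          S.card ≤ q * (S.filter fun f => cls f = g).card := by
        apply Finset.exists_le_of_sum_le Finset.univ_nonempty
        rw [Finset.sum_const, ← Finset.mul_sum, ← hsum, Finset.card_univ, hq'q, smul_eq_mul]
      -- the cover for insert e E'
      set F : Finset (V → Option (Fin k)) := F' ∪ (univ.image (Φ g)) with hF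
      have hcover : IsCover (insert e E') k F := by
        constructor
        · intro φ hφ
          rw [hF, Finset.mem_union] at hφ
          rcases hφ with hφ | hφ
          · exact Finset.mem_insert_of_mem (hF'.1 φ hφ)
          · obtain ⟨c, -, rfl⟩ := Finset.mem_image.mp hφ
            rw [hdom]
            exact Finset.mem_insert_self _ _
        · intro φ hφ ψ hψ hne hdomeq v c' hc'
          rw [hF, Finset.mem_union] at hφ hψ
          rcases hφ with hφ | hφ <;> rcases hψ with hψ | hψ
          · exact hF'.2 φ hφ ψ hψ hne hdomeq v c' hc'
          · exfalso
            obtain ⟨c₂, -, rfl⟩ := Finset.mem_image.mp hψ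
            have h1 : pmDom φ ∈ E' := hF'.1 φ hφ
            rw [hdomeq, hdom] at h1
            exact he h1
          · exfalso
            obtain ⟨c₁, -, rfl⟩ := Finset.mem_image.mp hφ
            have h1 : pmDom ψ ∈ E' := hF'.1 ψ hψ
            rw [← hdomeq, hdom] at h1
            exact he h1
          · obtain ⟨c₁, -, rfl⟩ := Finset.mem_image.mp hφ
            obtain ⟨c₂, -, rfl⟩ := Finset.mem_image.mp hψ
            have hcne : c₁ ≠ c₂ := by
              intro h; subst h; exact hne rfl
            simp only [hΦ] at hc' ⊢
            by_cases hv : v ∈ e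
            · rw [if_pos hv] at hc' ⊢
              intro hcon
              have e1 : ext g v + c₁ = c' := Option.some.inj hc'
              have e2 : ext g v + c₂ = c' := Option.some.inj hcon
              exact hcne (add_left_cancel (e1.trans e2.symm))
            · rw [if_neg hv] at hc'; exact absurd hc' (by simp)
      -- counting the F-colorings
      have hcount : dpCount k F + (S.filter fun f => cls f = g).card = S.card := by
        have hfe : (univ.filter fun f : V → Fin k => ∀ φ ∈ F, ¬ SubMap φ f)
            = S.filter (fun f => ¬ cls f = g) := by
          ext f
          simp only [hS, Finset.mem_filter, Finset.mem_univ, true_and]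
          constructor
          · intro h
            refine ⟨fun φ hφ => h φ (by rw [hF]; exact Finset.mem_union_left _ hφ),
              fun hcf => ?_⟩
            exact h (Φ g (f w))
              (by rw [hF]
                  exact Finset.mem_union_right _
                    (Finset.mem_image_of_mem _ (Finset.mem_univ _)))
              ((hsub g (f w) f).mpr ⟨hcf, rfl⟩)
          · rintro ⟨h1, h2⟩ φ hφ
            rw [hF] at hφ
            rcases Finset.mem_union.mp hφ with hφ | hφ
            · exact h1 φ hφ
            · obtain ⟨c, -, rfl⟩ := Finset.mem_image.mp hφ
              intro hcon
              exact h2 ((hsub g c f).mp hcon).1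
        rw [dpCount_eq_card, hfe, Nat.add_comm]
        exact Finset.card_filter_add_card_filter_not _
      -- arithmetic
      set N' : ℕ := S.card with hN'
      set fib : ℕ := (S.filter fun f => cls f = g).card with hfib
      have key : dpCount k F * q + N' ≤ N' * q := by
        calc dpCount k F * q + N' ≤ dpCount k F * q + q * fib := by
              exact Nat.add_le_add_left hg _
          _ = q * (dpCount k F + fib) := by ring
          _ = N' * q := by rw [hcount]; ring
      have hNq : N' * q = N' * (q - 1) + N' := by
        have : q - 1 + 1 = q := Nat.sub_add_cancel hq1
        calc N' * q = N' * (q - 1 + 1) := by rw [this]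
          _ = N' * (q - 1) + N' := by ring
      have key2 : dpCount k F * q ≤ N' * (q - 1) := by
        rw [hNq] at key
        exact Nat.le_of_add_le_add_right key
      have hN'' : dpPoly E' k = N' := by rw [hN, ← hScard]
      rw [Finset.card_insert_of_notMem he]
      have hpow : k ^ ((r - 1) * (E'.card + 1)) = q ^ E'.card * q := by
        rw [hqdef, ← pow_mul, ← pow_add, Nat.mul_succ]
      have hpow' : k ^ ((r - 1) * E'.card) = q ^ E'.card := by
        rw [hqdef, ← pow_mul]
      calc dpPoly (insert e E') k * k ^ ((r - 1) * (E'.card + 1))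
          = dpPoly (insert e E') k * (q ^ E'.card * q) := by rw [hpow]
        _ ≤ dpCount k F * (q ^ E'.card * q) :=
            mul_le_mul_left (dpPoly_le_dpCount hcover) _
        _ = (dpCount k F * q) * q ^ E'.card := by ring
        _ ≤ (N' * (q - 1)) * q ^ E'.card := mul_le_mul_left key2 _
        _ = (N' * q ^ E'.card) * (q - 1) := by ring
        _ ≤ (k ^ n * (q - 1) ^ E'.card) * (q - 1) := by
            refine mul_le_mul_left ?_ _
            rw [← hN'', ← hpow']
            exact IH'
        _ = k ^ n * (q - 1) ^ (E'.card + 1) := by ring
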